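/- arXiv:1802.06447 — 3 statements merged into one kernel-verified Lean document; each statement's English description precedes it below -/
import Mathlib

section
/- For every integer n ≥ 2 and every real p with n-1 ≤ p ≤ n, there exists a constant C > 0 (depending only on p and n) such that for all complex numbers z: Re(log(1+z)) + Re(∑_{m=1}^{n-1} (-1)^m z^m / m) ≤ C |z|^p, where for z = -1 the left-hand side is interpreted as -∞. -/
open Complex Finset

private lemma rpow_aux {p r m : ℝ} (hr : 1/2 < r) (hm0 : 0 ≤ m) (hmp : m ≤ p) :
    r ^ m ≤ 2 ^ p * r ^ p := by
  have hr0 : (0:ℝ) < r := by linarith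
  have h1 : r ^ p * r⁻¹ ^ (p - m) = r ^ m := by
    rw [Real.inv_rpow hr0.le, ← Real.rpow_neg hr0.le, ← Real.rpow_add hr0]
    ring_nf
  have hinv : r⁻¹ ≤ 2 := by
    rw [inv_le_comm₀ hr0 (by norm_num)]
    linarith
  have h2 : r⁻¹ ^ (p - m) ≤ 2 ^ (p - m) :=
    Real.rpow_le_rpow (by positivity) hinv (by linarith)
  have h3 : (2:ℝ) ^ (p - m) ≤ 2 ^ p :=
    Real.rpow_le_rpow_of_exponent_le one_le_two (by linarith)
  calc r ^ m = r ^ p * r⁻¹ ^ (p - m) := h1.symm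
    _ ≤ r ^ p * 2 ^ p := by
        have := Real.rpow_nonneg hr0.le p
        nlinarith
    _ = 2 ^ p * r ^ p := mul_comm _ _

/-- Pointwise estimate behind the bound on regularized determinants:
for `n ≥ 2` and `n-1 ≤ p ≤ n` there is `C > 0` with
`Re log(1+z) + Re ∑_{m=1}^{n-1} (-1)^m z^m/m ≤ C |z|^p` for all `z ≠ -1`. -/
theorem stmt0 (n : ℕ) (hn : 2 ≤ n) (p : ℝ) (hp1 : (n : ℝ) - 1 ≤ p) (hp2 : p ≤ n) :
    ∃ C : ℝ, 0 < C ∧ ∀ z : ℂ, z ≠ -1 →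
      (Complex.log (1 + z)).re + (∑ m ∈ Finset.Icc 1 (n - 1), ((-1 : ℂ) ^ m * z ^ m / m)).re
        ≤ C * ‖z‖ ^ p := by
  have hn2 : (2:ℝ) ≤ (n:ℝ) := by exact_mod_cast hn
  have hp0 : (1:ℝ) ≤ p := by linarith
  refine ⟨(n:ℝ) * 2 ^ (n:ℝ) + 2, by positivity, fun z hz ↦ ?_⟩
  set r := ‖z‖ with hrdef
  have hr0 : 0 ≤ r := norm_nonneg z
  have hC2 : (2:ℝ) ≤ (n:ℝ) * 2 ^ (n:ℝ) + 2 := by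
    have : (0:ℝ) ≤ (n:ℝ) * 2 ^ (n:ℝ) := by positivity
    linarith
  -- rewrite the sum as -logTaylor n z
  have hTaylor : Complex.logTaylor n z
      = ∑ m ∈ Finset.Icc 1 (n - 1), ((-1:ℂ) ^ (m + 1) * z ^ m / m) := by
    rw [Complex.logTaylor]
    refine (Finset.sum_subset ?_ ?_).symm
    · intro m hm
      simp only [Finset.mem_Icc] at hm
      simp only [Finset.mem_range]
      omega
    · intro m hm hm'
      simp only [Finset.mem_range] at hm
      simp only [Finset.mem_Icc] at hm'
      have : m = 0 := by omega
      subst this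
      simp
  have hS : (∑ m ∈ Finset.Icc 1 (n - 1), ((-1:ℂ) ^ m * z ^ m / m))
      = -(Complex.logTaylor n z) := by
    rw [hTaylor, ← Finset.sum_neg_distrib]
    exact Finset.sum_congr rfl fun m _ ↦ by ring
  have key : (Complex.log (1 + z)).re
        + (∑ m ∈ Finset.Icc 1 (n - 1), ((-1:ℂ) ^ m * z ^ m / m)).re
      = (Complex.log (1 + z) - Complex.logTaylor n z).re := by
    rw [hS, Complex.sub_re, Complex.neg_re]
    ring
  rcases le_or_gt r (1/2) with hhalf | hhalf
  · -- small case
    by_cases hz0 : z = 0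
    · subst hz0
      have hr00 : r = 0 := by simp [hrdef]
      rw [key]
      simp only [add_zero, Complex.log_one, Complex.logTaylor_at_zero, sub_self, Complex.zero_re]
      rw [hr00, Real.zero_rpow (by linarith : p ≠ 0), mul_zero]
    · have hrpos : 0 < r := norm_pos_iff.mpr hz0
      have hlt1 : r < 1 := by linarith
      have hb := Complex.norm_log_sub_logTaylor_le (n - 1) (z := z)
        (by simpa [hrdef] using hlt1)
      rw [show n - 1 + 1 = n by omega] at hb
      rw [key]
      have hre : (Complex.log (1 + z) - Complex.logTaylor n z).re
          ≤ ‖Complex.log (1 + z) - Complex.logTaylor n z‖ := Complex.re_le_norm _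
      have hnorm : ‖z‖ = r := rfl
      rw [hnorm] at hb
      have hinv2 : (1 - r)⁻¹ ≤ 2 := by
        rw [inv_le_comm₀ (by linarith) (by norm_num)]
        linarith
      have hnpos : (0:ℝ) < ((n - 1 : ℕ) : ℝ) + 1 := by positivity
      have hb2 : ‖Complex.log (1 + z) - Complex.logTaylor n z‖ ≤ 2 * r ^ n := by
        calc ‖Complex.log (1 + z) - Complex.logTaylor n z‖
            ≤ r ^ n * (1 - r)⁻¹ / (((n - 1 : ℕ) : ℝ) + 1) := hb
          _ ≤ r ^ n * 2 / 1 := by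
              apply div_le_div₀ (by positivity) _ one_pos _
              · exact mul_le_mul_of_nonneg_left hinv2 (by positivity)
              · have : (0:ℝ) ≤ ((n - 1 : ℕ) : ℝ) := Nat.cast_nonneg _
                linarith
          _ = 2 * r ^ n := by ring
      have hrp : r ^ n ≤ r ^ p := by
        rw [← Real.rpow_natCast r n]
        exact Real.rpow_le_rpow_of_exponent_ge hrpos hlt1.le hp2
      have hrpnn : 0 ≤ r ^ p := Real.rpow_nonneg hr0 p
      calc (Complex.log (1 + z) - Complex.logTaylor n z).re
          ≤ 2 * r ^ n := hre.trans hb2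
        _ ≤ 2 * r ^ p := by linarith
        _ ≤ ((n:ℝ) * 2 ^ (n:ℝ) + 2) * r ^ p := by nlinarith
  · -- large case: r > 1/2
    have hrpos : (0:ℝ) < r := by linarith
    have hlog : (Complex.log (1 + z)).re ≤ r := by
      rw [Complex.log_re]
      have h1z : (0:ℝ) < ‖1 + z‖ := by
        apply norm_pos_iff.mpr
        intro h
        exact hz (by linear_combination h)
      have habs : ‖1 + z‖ ≤ 1 + r := by
        calc ‖1 + z‖ ≤ ‖(1:ℂ)‖ + ‖z‖ := norm_add_le 1 z
          _ = 1 + r := by simp [hrdef]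
      calc Real.log ‖1 + z‖ ≤ Real.log (1 + r) := Real.log_le_log h1z habs
        _ ≤ r := by
            have := Real.log_le_sub_one_of_pos (show (0:ℝ) < 1 + r by linarith)
            linarith
    have hterm : ∀ m ∈ Finset.Icc 1 (n - 1),
        ‖(-1:ℂ) ^ m * z ^ m / m‖ ≤ 2 ^ p * r ^ p := by
      intro m hm
      simp only [Finset.mem_Icc] at hm
      have h1m : (1:ℝ) ≤ (m:ℝ) := by exact_mod_cast hm.1
      have habs : ‖(-1:ℂ) ^ m * z ^ m / m‖ = r ^ m / m := by
        simp [hrdef]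
      rw [habs]
      have h1 : r ^ m / (m:ℝ) ≤ r ^ m := div_le_self (by positivity) h1m
      have h2 : r ^ m ≤ 2 ^ p * r ^ p := by
        rw [← Real.rpow_natCast r m]
        refine rpow_aux hhalf (by positivity) ?_
        calc (m:ℝ) ≤ ((n:ℝ) - 1) := by
              have : (m:ℝ) ≤ ((n - 1 : ℕ) : ℝ) := by exact_mod_cast hm.2
              have : ((n - 1 : ℕ) : ℝ) = (n:ℝ) - 1 := by
                have := hn
                push_cast [Nat.cast_sub (by omega : 1 ≤ n)]
                ring
              linarith [‹(m:ℝ) ≤ ((n - 1 : ℕ) : ℝ)›, this.le]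
          _ ≤ p := hp1
      linarith
    have hSre : (∑ m ∈ Finset.Icc 1 (n - 1), ((-1:ℂ) ^ m * z ^ m / m)).re
        ≤ ((n:ℝ) - 1) * (2 ^ p * r ^ p) := by
      have h1 : (∑ m ∈ Finset.Icc 1 (n - 1), ((-1:ℂ) ^ m * z ^ m / m)).re
          ≤ ‖∑ m ∈ Finset.Icc 1 (n - 1), ((-1:ℂ) ^ m * z ^ m / m)‖ :=
        Complex.re_le_norm _
      have h2 : ‖∑ m ∈ Finset.Icc 1 (n - 1), ((-1:ℂ) ^ m * z ^ m / m)‖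
          ≤ ∑ m ∈ Finset.Icc 1 (n - 1), ‖(-1:ℂ) ^ m * z ^ m / m‖ :=
        norm_sum_le _ _
      have h3 : (∑ m ∈ Finset.Icc 1 (n - 1), ‖(-1:ℂ) ^ m * z ^ m / m‖)
          ≤ ∑ _m ∈ Finset.Icc 1 (n - 1), (2 ^ p * r ^ p) :=
        Finset.sum_le_sum hterm
      have hcard : (Finset.Icc 1 (n - 1)).card = n - 1 := by
        rw [Nat.card_Icc]
        omega
      have h4 : (∑ _m ∈ Finset.Icc 1 (n - 1), (2 ^ p * r ^ p))
          = ((n:ℝ) - 1) * (2 ^ p * r ^ p) := by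
        rw [Finset.sum_const, hcard, nsmul_eq_mul]
        congr 1
        push_cast [Nat.cast_sub (by omega : 1 ≤ n)]
        ring
      linarith
    have hr1 : r ≤ 2 ^ p * r ^ p := by
      have := rpow_aux (m := 1) hhalf zero_le_one hp0
      rwa [Real.rpow_one] at this
    have h2p : (2:ℝ) ^ p ≤ 2 ^ (n:ℝ) :=
      Real.rpow_le_rpow_of_exponent_le one_le_two hp2
    have hrpnn : 0 ≤ r ^ p := Real.rpow_nonneg hr0 p
    have h2pnn : (0:ℝ) ≤ 2 ^ p := Real.rpow_nonneg (by norm_num) p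
    calc (Complex.log (1 + z)).re
          + (∑ m ∈ Finset.Icc 1 (n - 1), ((-1:ℂ) ^ m * z ^ m / m)).re
        ≤ r + ((n:ℝ) - 1) * (2 ^ p * r ^ p) := add_le_add hlog hSre
      _ ≤ 2 ^ p * r ^ p + ((n:ℝ) - 1) * (2 ^ p * r ^ p) := by linarith
      _ = (n:ℝ) * (2 ^ p * r ^ p) := by ring
      _ ≤ (n:ℝ) * (2 ^ (n:ℝ) * r ^ p) :=
          mul_le_mul_of_nonneg_left (mul_le_mul_of_nonneg_right h2p hrpnn) (Nat.cast_nonneg n)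
      _ ≤ ((n:ℝ) * 2 ^ (n:ℝ) + 2) * r ^ p := by nlinarith
end

section
/- Let η : ℝ³ × ℝ³ × ℝ → ℂ be measurable with M^p := sup_{x,y} ∫_ℝ |η(x,y,λ)|^p dλ < ∞ for some p ≥ 2, and let W₁, W₂ ∈ L²(ℝ³). Then ∫_ℝ (∫_{ℝ³}∫_{ℝ³} |W₁(x)|² |η(x,y,λ)|² |W₂(y)|² dx dy)^{p/2} dλ ≤ M^p ‖W₁‖_{L²}^p ‖W₂‖_{L²}^p. -/
open MeasureTheory ENNReal

-- Jensen-type lemma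
lemma jensen_aux {α : Type*} [MeasurableSpace α] (μ : Measure α) {F : α → ℝ≥0∞}
    (hF : AEMeasurable F μ) {r : ℝ} (hr : 1 ≤ r) :
    (∫⁻ a, F a ∂μ) ^ r ≤ (∫⁻ a, F a ^ r ∂μ) * (μ Set.univ) ^ (r - 1) := by
  rcases eq_or_lt_of_le hr with h | h
  · simp [← h]
  · have hconj : r.HolderConjugate (r / (r - 1)) := Real.HolderConjugate.conjExponent h
    have h1 : (∫⁻ a, F a ∂μ) = ∫⁻ a, F a * (fun _ => (1:ℝ≥0∞)) a ∂μ := by simp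
    have hH := ENNReal.lintegral_mul_le_Lp_mul_Lq μ hconj hF (aemeasurable_const (b := (1:ℝ≥0∞)))
    rw [h1]
    calc (∫⁻ a, F a * (fun _ => (1:ℝ≥0∞)) a ∂μ) ^ r
        ≤ ((∫⁻ a, F a ^ r ∂μ) ^ (1/r) * (∫⁻ a, (1:ℝ≥0∞) ^ (r/(r-1)) ∂μ) ^ (1/(r/(r-1)))) ^ r := by
          gcongr
          exact hH
      _ = (∫⁻ a, F a ^ r ∂μ) * (μ Set.univ) ^ (r - 1) := by
          rw [ENNReal.mul_rpow_of_nonneg _ _ (by linarith : (0:ℝ) ≤ r),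
            ← ENNReal.rpow_mul, ← ENNReal.rpow_mul]
          simp only [ENNReal.one_rpow, lintegral_const, one_mul]
          rw [one_div_mul_eq_div, div_self (by linarith : r ≠ 0), ENNReal.rpow_one]
          congr 1
          rw [one_div, inv_div, div_mul_cancel₀ _ (by linarith : r ≠ 0)]

private abbrev E3 := EuclideanSpace ℝ (Fin 3)

set_option maxHeartbeats 1000000 in

/-- Hölder-inequality core of the `λ`-integrability of Hilbert–Schmidt norms
`‖W₁ T_λ W₂‖_{S₂}` for integral operators with kernels `η(·,·,λ)`. -/
theorem stmt5 (p M : ℝ) (hp : 2 ≤ p) (hM : 0 ≤ M)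
    (η : EuclideanSpace ℝ (Fin 3) → EuclideanSpace ℝ (Fin 3) → ℝ → ℂ)
    (hη : Measurable fun q : EuclideanSpace ℝ (Fin 3) × EuclideanSpace ℝ (Fin 3) × ℝ =>
      η q.1 q.2.1 q.2.2)
    (W1 W2 : EuclideanSpace ℝ (Fin 3) → ℂ)
    (hW1 : MemLp W1 2 volume) (hW2 : MemLp W2 2 volume)
    (hsup : ∀ x y, (∫⁻ l, (‖η x y l‖₊ : ℝ≥0∞) ^ p) ≤ ENNReal.ofReal (M ^ p)) :
    (∫⁻ l, (∫⁻ x, ∫⁻ y,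
        (‖W1 x‖₊ : ℝ≥0∞) ^ (2:ℝ) * (‖η x y l‖₊ : ℝ≥0∞) ^ (2:ℝ) * (‖W2 y‖₊ : ℝ≥0∞) ^ (2:ℝ))
          ^ (p / 2))
      ≤ ENNReal.ofReal (M ^ p) * (∫⁻ x, (‖W1 x‖₊ : ℝ≥0∞) ^ (2:ℝ)) ^ (p / 2) *
        (∫⁻ y, (‖W2 y‖₊ : ℝ≥0∞) ^ (2:ℝ)) ^ (p / 2) := by
  have hr1 : (1:ℝ) ≤ p / 2 := by linarith
  have hp0 : (0:ℝ) < p := by linarith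
  have ha : AEMeasurable (fun x => (‖W1 x‖₊ : ℝ≥0∞) ^ (2:ℝ)) volume :=
    hW1.1.enorm.pow_const (2:ℝ)
  have hb : AEMeasurable (fun y => (‖W2 y‖₊ : ℝ≥0∞) ^ (2:ℝ)) volume :=
    hW2.1.enorm.pow_const (2:ℝ)
  obtain ⟨A, hA, hAeq⟩ : ∃ A : E3 → ℝ≥0∞, Measurable A ∧
      (fun x => (‖W1 x‖₊ : ℝ≥0∞) ^ (2:ℝ)) =ᵐ[volume] A :=
    ⟨ha.mk _, ha.measurable_mk, ha.ae_eq_mk⟩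
  obtain ⟨B, hB, hBeq⟩ : ∃ B : E3 → ℝ≥0∞, Measurable B ∧
      (fun y => (‖W2 y‖₊ : ℝ≥0∞) ^ (2:ℝ)) =ᵐ[volume] B :=
    ⟨hb.mk _, hb.measurable_mk, hb.ae_eq_mk⟩
  have hfin1 : (∫⁻ x, (‖W1 x‖₊ : ℝ≥0∞) ^ (2:ℝ)) ≠ ⊤ := by
    have := lintegral_rpow_enorm_lt_top_of_eLpNorm_lt_top (f := W1) (p := 2)
      two_ne_zero ENNReal.ofNat_ne_top hW1.2
    simpa [enorm_eq_nnnorm] using this.ne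
  have hfin2 : (∫⁻ y, (‖W2 y‖₊ : ℝ≥0∞) ^ (2:ℝ)) ≠ ⊤ := by
    have := lintegral_rpow_enorm_lt_top_of_eLpNorm_lt_top (f := W2) (p := 2)
      two_ne_zero ENNReal.ofNat_ne_top hW2.2
    simpa [enorm_eq_nnnorm] using this.ne
  haveI hFA : IsFiniteMeasure (volume.withDensity A) :=
    isFiniteMeasure_withDensity (by rwa [← lintegral_congr_ae hAeq])
  haveI hFB : IsFiniteMeasure (volume.withDensity B) :=
    isFiniteMeasure_withDensity (by rwa [← lintegral_congr_ae hBeq])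
  set μ := (volume.withDensity A).prod (volume.withDensity B) with hμ_def
  haveI : IsFiniteMeasure μ := by rw [hμ_def]; infer_instance
  have hH : ∀ l, Measurable fun z : E3 × E3 => (‖η z.1 z.2 l‖₊ : ℝ≥0∞) := fun l =>
    (hη.comp ((measurable_fst).prodMk ((measurable_snd).prodMk measurable_const))).enorm
  -- key identity
  have key : ∀ l, (∫⁻ x, ∫⁻ y,
        (‖W1 x‖₊ : ℝ≥0∞) ^ (2:ℝ) * (‖η x y l‖₊ : ℝ≥0∞) ^ (2:ℝ) * (‖W2 y‖₊ : ℝ≥0∞) ^ (2:ℝ))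
      = ∫⁻ z, (‖η z.1 z.2 l‖₊ : ℝ≥0∞) ^ (2:ℝ) ∂μ := by
    intro l
    have hHl : Measurable fun z : E3 × E3 => (‖η z.1 z.2 l‖₊ : ℝ≥0∞) ^ (2:ℝ) :=
      (hH l).pow_const _
    calc (∫⁻ x, ∫⁻ y,
          (‖W1 x‖₊ : ℝ≥0∞) ^ (2:ℝ) * (‖η x y l‖₊ : ℝ≥0∞) ^ (2:ℝ) * (‖W2 y‖₊ : ℝ≥0∞) ^ (2:ℝ))
        = ∫⁻ x, A x * ∫⁻ y, B y * (‖η x y l‖₊ : ℝ≥0∞) ^ (2:ℝ) := by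
          refine lintegral_congr_ae ?_
          filter_upwards [hAeq] with x hx
          rw [← hx]
          have h1 : (∫⁻ y, (‖W1 x‖₊ : ℝ≥0∞) ^ (2:ℝ) * (‖η x y l‖₊ : ℝ≥0∞) ^ (2:ℝ)
                * (‖W2 y‖₊ : ℝ≥0∞) ^ (2:ℝ))
              = ∫⁻ y, (‖W1 x‖₊ : ℝ≥0∞) ^ (2:ℝ)
                * ((‖W2 y‖₊ : ℝ≥0∞) ^ (2:ℝ) * (‖η x y l‖₊ : ℝ≥0∞) ^ (2:ℝ)) :=
            lintegral_congr fun y => by ring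
          rw [h1, lintegral_const_mul' _ _
            (ENNReal.rpow_lt_top_of_nonneg (by norm_num) ENNReal.coe_ne_top).ne]
          congr 1
          refine lintegral_congr_ae ?_
          filter_upwards [hBeq] with y hy
          rw [hy]
        _ = ∫⁻ x, A x * ∫⁻ y, (‖η x y l‖₊ : ℝ≥0∞) ^ (2:ℝ) ∂(volume.withDensity B) := by
          refine lintegral_congr fun x => ?_
          congr 1
          have h1 : Measurable fun y : E3 => η x y l :=
            hη.comp (measurable_const.prodMk (measurable_id.prodMk measurable_const))
          have hmx : Measurable fun y : E3 => (‖η x y l‖₊ : ℝ≥0∞) ^ (2:ℝ) :=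
            h1.enorm.pow_const (2:ℝ)
          rw [lintegral_withDensity_eq_lintegral_mul volume hB hmx]
          rfl
        _ = ∫⁻ x, (∫⁻ y, (‖η x y l‖₊ : ℝ≥0∞) ^ (2:ℝ) ∂(volume.withDensity B))
              ∂(volume.withDensity A) := by
          rw [lintegral_withDensity_eq_lintegral_mul volume hA hHl.lintegral_prod_right']
          rfl
        _ = ∫⁻ z, (‖η z.1 z.2 l‖₊ : ℝ≥0∞) ^ (2:ℝ) ∂μ := (lintegral_prod _ hHl.aemeasurable).symm
  have hμuniv : μ Set.univ
      = (∫⁻ x, (‖W1 x‖₊ : ℝ≥0∞) ^ (2:ℝ)) * (∫⁻ y, (‖W2 y‖₊ : ℝ≥0∞) ^ (2:ℝ)) := by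
    rw [hμ_def, ← Set.univ_prod_univ, Measure.prod_prod,
      withDensity_apply _ MeasurableSet.univ, withDensity_apply _ MeasurableSet.univ,
      setLIntegral_univ, setLIntegral_univ,
      lintegral_congr_ae hAeq.symm, lintegral_congr_ae hBeq.symm]
  have hμtop : μ Set.univ ≠ ⊤ := measure_ne_top μ _
  calc (∫⁻ l, (∫⁻ x, ∫⁻ y,
          (‖W1 x‖₊ : ℝ≥0∞) ^ (2:ℝ) * (‖η x y l‖₊ : ℝ≥0∞) ^ (2:ℝ) * (‖W2 y‖₊ : ℝ≥0∞) ^ (2:ℝ))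
            ^ (p / 2))
      ≤ ∫⁻ l, (∫⁻ z, (‖η z.1 z.2 l‖₊ : ℝ≥0∞) ^ p ∂μ) * (μ Set.univ) ^ (p / 2 - 1) := by
        refine lintegral_mono fun l => ?_
        rw [key l]
        refine le_trans (jensen_aux μ (((hH l).pow_const _)).aemeasurable hr1) ?_
        refine mul_le_mul_left (le_of_eq (lintegral_congr fun z => ?_)) _
        rw [← ENNReal.rpow_mul]
        congr 1
        ring
    _ = (∫⁻ z, (∫⁻ l, (‖η z.1 z.2 l‖₊ : ℝ≥0∞) ^ p) ∂μ) * (μ Set.univ) ^ (p / 2 - 1) := by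
        rw [lintegral_mul_const' _ _
          (ENNReal.rpow_lt_top_of_nonneg (by linarith) hμtop).ne]
        congr 1
        refine lintegral_lintegral_swap ?_
        exact (((hη.comp ((measurable_snd.fst).prodMk
          ((measurable_snd.snd).prodMk measurable_fst))).enorm).pow_const p).aemeasurable
    _ ≤ (ENNReal.ofReal (M ^ p) * μ Set.univ) * (μ Set.univ) ^ (p / 2 - 1) := by
        refine mul_le_mul_left ?_ _
        calc (∫⁻ z, (∫⁻ l, (‖η z.1 z.2 l‖₊ : ℝ≥0∞) ^ p) ∂μ)
            ≤ ∫⁻ _, ENNReal.ofReal (M ^ p) ∂μ := lintegral_mono fun z => hsup z.1 z.2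
          _ = ENNReal.ofReal (M ^ p) * μ Set.univ := lintegral_const _
    _ ≤ ENNReal.ofReal (M ^ p) * (∫⁻ x, (‖W1 x‖₊ : ℝ≥0∞) ^ (2:ℝ)) ^ (p / 2) *
        (∫⁻ y, (‖W2 y‖₊ : ℝ≥0∞) ^ (2:ℝ)) ^ (p / 2) := by
        rw [mul_assoc, mul_assoc]
        refine mul_le_mul_right ?_ _
        have hstep : μ Set.univ * (μ Set.univ) ^ (p / 2 - 1) ≤ (μ Set.univ) ^ (p / 2) := by
          rcases eq_or_ne (μ Set.univ) 0 with h0 | h0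
          · simp [h0, ENNReal.zero_rpow_of_pos (by linarith : (0:ℝ) < p / 2)]
          · refine le_of_eq ?_
            have h12 : (1:ℝ) + (p / 2 - 1) = p / 2 := by ring
            nth_rewrite 1 [← ENNReal.rpow_one (μ Set.univ)]
            rw [← ENNReal.rpow_add _ _ h0 hμtop, h12]
        refine le_trans hstep (le_of_eq ?_)
        rw [hμuniv, ENNReal.mul_rpow_of_nonneg _ _ (by linarith : (0:ℝ) ≤ p / 2)]
end

section
/- Let λ ∈ ℂ with Im λ ≥ 0, and let x₁, y₁ ∈ ℝ satisfy |x₁| < |λ|/2 and |y₁| < |λ|/2, with λ ≠ 0. Set Λ = λ - (x₁ + y₁)/2, and for w ∈ ℂ let √w denote the branch with Im √w ≥ 0. Then for all r > 0: |e^{i√Λ · r} - e^{i√λ · r}| / (4π r) ≤ (√2 / (16π)) · |x₁ + y₁| / |λ|^{1/2}. -/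
set_option maxHeartbeats 1000000

open Complex

lemma exp_lip {z w : ℂ} (hz : z.re ≤ 0) (hw : w.re ≤ 0) :
    ‖Complex.exp z - Complex.exp w‖ ≤ ‖z - w‖ := by
  have hconv : Convex ℝ {c : ℂ | c.re ≤ 0} := convex_halfSpace_re_le 0
  have := hconv.norm_image_sub_le_of_norm_hasFDerivWithin_le
    (f := Complex.exp)
    (f' := fun x => ContinuousLinearMap.smulRight (1 : ℂ →L[ℂ] ℂ) (Complex.exp x))
    (C := 1)
    (fun x _ => (Complex.hasDerivAt_exp x).hasFDerivAt.hasFDerivWithinAt)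
    (fun x hx => by
      simp only [ContinuousLinearMap.norm_smulRight_apply, one_mul, norm_one]
      simpa [Complex.norm_exp] using Real.exp_le_one_iff.2 hx)
    hw hz
  simpa using this

lemma sqrt_props (z : ℂ) (hz : 0 ≤ z.im) :
    0 ≤ (z ^ (1/2:ℂ)).re ∧ 0 ≤ (z ^ (1/2:ℂ)).im ∧ (z ^ (1/2:ℂ)) ^ 2 = z := by
  refine ⟨?_, ?_, ?_⟩
  · rw [show (1/2:ℂ) = (2⁻¹:ℂ) by norm_num, Complex.cpow_inv_two_re]
    positivity
  · rw [show (1/2:ℂ) = (2⁻¹:ℂ) by norm_num, Complex.cpow_inv_two_im_eq_sqrt hz]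
    positivity
  · rw [show (1/2:ℂ) = (((2:ℕ)):ℂ)⁻¹ by norm_num]
    exact Complex.cpow_nat_inv_pow _ two_ne_zero

/-- Pointwise comparison of the free-resolvent kernel at the shifted spectral
parameter `Λ = λ - (x₁+y₁)/2` with the one at `λ`. -/
theorem stmt6 (l : ℂ) (hl : 0 ≤ l.im) (hl0 : l ≠ 0) (x1 y1 : ℝ)
    (hx : |x1| < ‖l‖ / 2) (hy : |y1| < ‖l‖ / 2)
    (r : ℝ) (hr : 0 < r) :
    ‖Complex.exp (Complex.I * (l - ((x1 + y1 : ℝ) : ℂ) / 2) ^ (1/2 : ℂ) * r) -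
        Complex.exp (Complex.I * l ^ (1/2 : ℂ) * r)‖ / (4 * Real.pi * r)
      ≤ (Real.sqrt 2 / (16 * Real.pi)) * |x1 + y1| / ‖l‖ ^ ((1:ℝ)/2) := by
  have hl_pos : 0 < ‖l‖ := norm_pos_iff.2 hl0
  set d : ℂ := ((x1 + y1 : ℝ) : ℂ) / 2 with hd
  set L : ℂ := l - d with hL
  have habsd : ‖d‖ = |x1 + y1| / 2 := by
    rw [hd, norm_div, Complex.norm_real, Real.norm_eq_abs]
    norm_num
  have hdlt : ‖d‖ < ‖l‖ / 2 := by
    rw [habsd]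
    have := abs_add_le x1 y1
    linarith
  have hLabs : ‖l‖ / 2 ≤ ‖L‖ := by
    have h1 : l = L + d := by rw [hL]; ring
    have h2 := norm_add_le L d
    rw [← h1] at h2
    linarith
  have hLim : 0 ≤ L.im := by
    rw [hL]
    simp [hd]
    exact hl
  obtain ⟨haRe, haIm, ha2⟩ := sqrt_props L hLim
  obtain ⟨hbRe, hbIm, hb2⟩ := sqrt_props l hl
  set a := L ^ (1/2:ℂ)
  set b := l ^ (1/2:ℂ)
  have habsa : (‖a‖) ^ 2 = ‖L‖ := by rw [← norm_pow, ha2]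
  have habsb : (‖b‖) ^ 2 = ‖l‖ := by rw [← norm_pow, hb2]
  set w : ℂ := a * (starRingEnd ℂ) b with hw
  have hwre : w.re = a.re * b.re + a.im * b.im := by
    simp [hw, Complex.mul_re]
  have hw0 : 0 ≤ w.re := by rw [hwre]; positivity
  have hwsq2 : w ^ 2 = L * (starRingEnd ℂ) l := by
    rw [hw, mul_pow, ← map_pow, ha2, hb2]
  have hwresq : w.re ^ 2 = (‖L * (starRingEnd ℂ) l‖ + (L * (starRingEnd ℂ) l).re) / 2 := by
    have e1 : (w ^ 2).re = w.re ^ 2 - w.im ^ 2 := by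
      rw [pow_two, Complex.mul_re]; ring
    have e2 : ‖w ^ 2‖ = w.re ^ 2 + w.im ^ 2 := by
      rw [norm_pow, Complex.sq_norm, Complex.normSq_apply]; ring
    rw [← hwsq2, e1, e2]; ring
  have habsLl : ‖L * (starRingEnd ℂ) l‖ = ‖L‖ * ‖l‖ := by
    simp
  have hreLl : (‖l‖) ^ 2 / 2 ≤ (L * (starRingEnd ℂ) l).re := by
    have hsplit : L * (starRingEnd ℂ) l = l * (starRingEnd ℂ) l - d * (starRingEnd ℂ) l := by
      rw [hL]; ring
    have h1 : (l * (starRingEnd ℂ) l).re = (‖l‖) ^ 2 := by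
      rw [Complex.mul_conj]
      simp [Complex.sq_norm]
    have h2 : (d * (starRingEnd ℂ) l).re ≤ ‖d‖ * ‖l‖ := by
      calc (d * (starRingEnd ℂ) l).re ≤ ‖d * (starRingEnd ℂ) l‖ := Complex.re_le_norm _
        _ = ‖d‖ * ‖l‖ := by simp
    have h3 : ‖d‖ * ‖l‖ ≤ (‖l‖ / 2) * ‖l‖ :=
      mul_le_mul_of_nonneg_right hdlt.le (norm_nonneg l)
    rw [hsplit, Complex.sub_re, h1]
    nlinarith
  have hwre_ge : ‖l‖ / 2 ≤ w.re := by
    nlinarith [hwresq, habsLl, hreLl, hLabs, hl_pos, hw0, norm_nonneg L]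
  have hsumsq : (‖a + b‖) ^ 2 = (‖a‖) ^ 2 + (‖b‖) ^ 2 + 2 * w.re := by
    rw [Complex.sq_norm, Complex.sq_norm, Complex.sq_norm, hwre]
    simp [Complex.normSq_apply, Complex.add_re, Complex.add_im]
    ring
  have hsum_ge : 2 * ‖l‖ ≤ (‖a + b‖) ^ 2 := by
    rw [hsumsq, habsa, habsb]
    linarith
  have hsqrt2 : Real.sqrt 2 * Real.sqrt (‖l‖) ≤ ‖a + b‖ := by
    rw [← Real.sqrt_mul (by norm_num : (0:ℝ) ≤ 2)]
    calc Real.sqrt (2 * ‖l‖) ≤ Real.sqrt ((‖a + b‖) ^ 2) :=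
          Real.sqrt_le_sqrt hsum_ge
      _ = ‖a + b‖ := Real.sqrt_sq (norm_nonneg _)
  have habs_sub_mul : ‖a - b‖ * ‖a + b‖ = ‖d‖ := by
    rw [← norm_mul]
    have : (a - b) * (a + b) = -d := by linear_combination ha2 - hb2
    rw [this, norm_neg]
  have hpos2 : 0 < Real.sqrt 2 * Real.sqrt (‖l‖) := by positivity
  have hab_le : ‖a - b‖ ≤ ‖d‖ / (Real.sqrt 2 * Real.sqrt (‖l‖)) := by
    rw [le_div_iff₀ hpos2, ← habs_sub_mul]
    exact mul_le_mul_of_nonneg_left hsqrt2 (norm_nonneg _)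
  -- exponential estimate
  have hza : (Complex.I * a * (r:ℂ)).re = -(a.im * r) := by
    simp [Complex.mul_re, Complex.mul_im]
  have hzb : (Complex.I * b * (r:ℂ)).re = -(b.im * r) := by
    simp [Complex.mul_re, Complex.mul_im]
  have hexp : ‖Complex.exp (Complex.I * a * r) - Complex.exp (Complex.I * b * r)‖
      ≤ ‖a - b‖ * r := by
    have h1 := exp_lip (z := Complex.I * a * r) (w := Complex.I * b * r)
      (by rw [hza]; nlinarith) (by rw [hzb]; nlinarith)
    have h2 : Complex.I * a * (r:ℂ) - Complex.I * b * r = Complex.I * (a - b) * r := by ring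
    rw [h2, norm_mul, norm_mul, Complex.norm_I, one_mul, Complex.norm_real, Real.norm_eq_abs,
      abs_of_pos hr] at h1
    exact h1
  have hLrp : ‖l‖ ^ ((1:ℝ)/2) = Real.sqrt (‖l‖) := by
    rw [Real.sqrt_eq_rpow]
  have hpi := Real.pi_pos
  have hsl : 0 < Real.sqrt (‖l‖) := Real.sqrt_pos.2 hl_pos
  have h2sq : Real.sqrt 2 * Real.sqrt 2 = 2 := Real.mul_self_sqrt (by norm_num)
  rw [hLrp]
  calc ‖Complex.exp (Complex.I * a * r) - Complex.exp (Complex.I * b * r)‖ / (4 * Real.pi * r)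
      ≤ (‖a - b‖ * r) / (4 * Real.pi * r) := by
        exact (div_le_div_iff_of_pos_right (by positivity)).2 hexp
    _ = ‖a - b‖ / (4 * Real.pi) := by
        field_simp
    _ ≤ (‖d‖ / (Real.sqrt 2 * Real.sqrt (‖l‖))) / (4 * Real.pi) := by
        gcongr
    _ = Real.sqrt 2 / (16 * Real.pi) * |x1 + y1| / Real.sqrt (‖l‖) := by
        rw [habsd]
        rw [div_eq_div_iff (by positivity) hsl.ne']
        field_simp
        linear_combination (-8 * |x1 + y1|) * h2sq
end
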